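/- The arrangement B of 27 hyperplanes in 𝔽₁₁³ given by the normal vectors (0,0,1), (0,1,1), (0,1,2), (0,1,3), (0,1,4), (0,1,5), (0,1,6), (1,0,0), (1,0,1), (1,2,2), (1,3,1), (1,3,10), (1,4,3), (1,4,4), (1,5,7), (1,6,4), (1,6,6), (1,8,5), (1,8,8), (1,9,0), (1,9,1), (1,9,4), (1,9,5), (1,9,8), (1,9,9), (1,10,0), (1,10,5) has the same intersection lattice invariants as A: every hyperplane of B contains either 10 or 11 rank-2 intersection points, and the multiset of point multiplicities is {{2^15, 3^70, 7^6}}. -/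

import Mathlib

open Module Matrix
open scoped Classical

namespace Arrgt

variable {K : Type*} [Field K]

/-- A (central) hyperplane arrangement in `K^n`: a finite set of kernels of
nonzero linear forms. -/
structure Arrangement (K : Type*) [Field K] (n : ℕ) where
  hyperplanes : Finset (Submodule K (Fin n → K))
  isHyp : ∀ H ∈ hyperplanes, ∃ f : (Fin n → K) →ₗ[K] K, f ≠ 0 ∧ H = LinearMap.ker f

/-- The deletion `A \ {H}`. -/
noncomputable def Arrangement.delete {n : ℕ} (A : Arrangement K n) (H : Submodule K (Fin n → K)) :
    Arrangement K n :=
  ⟨A.hyperplanes.erase H, fun H' hH' => A.isHyp H' (Finset.mem_of_mem_erase hH')⟩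

/-- The empty arrangement of rank `n`. -/
def emptyArr (K : Type*) [Field K] (n : ℕ) : Arrangement K n := ⟨∅, by simp⟩

/-- The linear polynomial in `K[x_1,...,x_n]` attached to a linear form. -/
noncomputable def linPoly {n : ℕ} (f : (Fin n → K) →ₗ[K] K) : MvPolynomial (Fin n) K :=
  ∑ i, MvPolynomial.C (f (Pi.single i 1)) * MvPolynomial.X i

/-- `Q` is a defining polynomial of the arrangement `A`: a product of linear forms
whose kernels are exactly the hyperplanes of `A`. -/
def IsDefiningPoly {n : ℕ} (A : Arrangement K n) (Q : MvPolynomial (Fin n) K) : Prop :=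
  ∃ α : Submodule K (Fin n → K) → ((Fin n → K) →ₗ[K] K),
    (∀ H ∈ A.hyperplanes, α H ≠ 0 ∧ LinearMap.ker (α H) = H) ∧
    Q = ∏ H ∈ A.hyperplanes, linPoly (α H)

/-- Evaluation of a derivation at the polynomial `Q`, as a linear map. -/
noncomputable def evalDer {n : ℕ} (Q : MvPolynomial (Fin n) K) :
    Derivation K (MvPolynomial (Fin n) K) (MvPolynomial (Fin n) K) →ₗ[MvPolynomial (Fin n) K]
      MvPolynomial (Fin n) K where
  toFun θ := θ Q
  map_add' _ _ := rfl
  map_smul' _ _ := rfl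

/-- The module `D(A) = {θ : θ(Q) ∈ Q·S}` of `A`-derivations (for a chosen defining
polynomial `Q`). -/
noncomputable def DerModule {n : ℕ} (Q : MvPolynomial (Fin n) K) :
    Submodule (MvPolynomial (Fin n) K)
      (Derivation K (MvPolynomial (Fin n) K) (MvPolynomial (Fin n) K)) :=
  Submodule.comap (evalDer Q) (Ideal.span {Q})

/-- `A` is a free arrangement: `D(A)` is a free module over `S = K[x_1,...,x_n]`. -/
def IsFree {n : ℕ} (A : Arrangement K n) : Prop :=
  ∃ Q, IsDefiningPoly A Q ∧ Module.Free (MvPolynomial (Fin n) K) (DerModule Q)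

/-- A nonzero derivation is homogeneous of polynomial degree `p` if all its
coefficients are homogeneous of degree `p`. -/
def IsHomogeneousDer {n : ℕ}
    (θ : Derivation K (MvPolynomial (Fin n) K) (MvPolynomial (Fin n) K)) (p : ℕ) : Prop :=
  θ ≠ 0 ∧ ∀ i, (θ (MvPolynomial.X i)).IsHomogeneous p

/-- `A` is free with exponents the multiset `e`: `D(A)` has a homogeneous basis whose
polynomial degrees form the multiset `e`. -/
def HasExponents {n : ℕ} (A : Arrangement K n) (e : Multiset ℕ) : Prop :=
  ∃ Q, IsDefiningPoly A Q ∧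
    ∃ (l : List ℕ) (b : Basis (Fin l.length) (MvPolynomial (Fin n) K) (DerModule Q)),
      (l : Multiset ℕ) = e ∧ ∀ i : Fin l.length, IsHomogeneousDer ((b i : DerModule Q) :
        Derivation K (MvPolynomial (Fin n) K) (MvPolynomial (Fin n) K)) (l.get i)

/-- `B` is (a model, via a linear identification `H ≅ K^n`, of) the restriction `A^H`. -/
def IsRestriction {n : ℕ} (A : Arrangement K (n + 1)) (H : Submodule K (Fin (n + 1) → K))
    (B : Arrangement K n) : Prop :=
  ∃ e : H ≃ₗ[K] (Fin n → K),
    B.hyperplanes = (A.hyperplanes.erase H).image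
      (fun H' => Submodule.map (e : H →ₗ[K] (Fin n → K)) (H'.comap H.subtype))

variable (K) in
/-- The class of inductively free arrangements. -/
inductive InductivelyFree : {n : ℕ} → Arrangement K n → Prop
  | empty (n : ℕ) : InductivelyFree (emptyArr K n)
  | add {n : ℕ} (A : Arrangement K (n + 1)) (H : Submodule K (Fin (n + 1) → K))
      (hH : H ∈ A.hyperplanes) (B : Arrangement K n) (hB : IsRestriction A H B)
      (e' e'' : Multiset ℕ)
      (h1 : InductivelyFree (A.delete H)) (h2 : InductivelyFree B)
      (h3 : HasExponents (A.delete H) e') (h4 : HasExponents B e'')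
      (h5 : e'' ≤ e') : InductivelyFree A

variable (K) in
/-- The class of recursively free arrangements. -/
inductive RecursivelyFree : {n : ℕ} → Arrangement K n → Prop
  | empty (n : ℕ) : RecursivelyFree (emptyArr K n)
  | add {n : ℕ} (A : Arrangement K (n + 1)) (H : Submodule K (Fin (n + 1) → K))
      (hH : H ∈ A.hyperplanes) (B : Arrangement K n) (hB : IsRestriction A H B)
      (e' e'' : Multiset ℕ)
      (h1 : RecursivelyFree (A.delete H)) (h2 : RecursivelyFree B)
      (h3 : HasExponents (A.delete H) e') (h4 : HasExponents B e'')
      (h5 : e'' ≤ e') : RecursivelyFree A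
  | del {n : ℕ} (A : Arrangement K (n + 1)) (H : Submodule K (Fin (n + 1) → K))
      (hH : H ∈ A.hyperplanes) (B : Arrangement K n) (hB : IsRestriction A H B)
      (e e'' : Multiset ℕ)
      (h1 : RecursivelyFree A) (h2 : RecursivelyFree B)
      (h3 : HasExponents A e) (h4 : HasExponents B e'')
      (h5 : e'' ≤ e) : RecursivelyFree (A.delete H)

/-- The intersection lattice of a set of hyperplanes: all intersections of finite
subsets (including the ambient space `⊤` as the empty intersection). -/
def setLattice {n : ℕ} (𝓐 : Set (Submodule K (Fin n → K))) : Set (Submodule K (Fin n → K)) :=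
  {X | ∃ s : Finset (Submodule K (Fin n → K)), ↑s ⊆ 𝓐 ∧ X = s.inf id}

/-- The intersection lattice of an arrangement. -/
def Arrangement.lattice {n : ℕ} (A : Arrangement K n) : Set (Submodule K (Fin n → K)) :=
  setLattice (↑A.hyperplanes)

/-- The linear form `x ↦ ∑ v i * x i` attached to a normal vector `v`. -/
noncomputable def lf {n : ℕ} (v : Fin n → K) : (Fin n → K) →ₗ[K] K :=
  ∑ i, v i • LinearMap.proj i

lemma lf_single {n : ℕ} (v : Fin n → K) (j : Fin n) : lf v (Pi.single j 1) = v j := by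
  simp [lf, Pi.single_apply, mul_ite, Finset.sum_ite_eq']

lemma lf_ne_zero {n : ℕ} {v : Fin n → K} (hv : v ≠ 0) : lf v ≠ 0 := by
  intro h
  apply hv
  funext j
  have := congrArg (fun f : (Fin n → K) →ₗ[K] K => f (Pi.single j 1)) h
  simpa [lf_single] using this

/-- The hyperplane `v^⊥` with normal vector `v`. -/
noncomputable def perp {n : ℕ} (v : Fin n → K) : Submodule K (Fin n → K) :=
  LinearMap.ker (lf v)

/-- Build an arrangement from a finite set of nonzero normal vectors. -/
noncomputable def mkArr {n : ℕ} (vs : Finset (Fin n → K)) (h : (0 : Fin n → K) ∉ vs) :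
    Arrangement K n :=
  ⟨vs.image perp, by
    intro H hH
    obtain ⟨v, hv, rfl⟩ := Finset.mem_image.mp hH
    exact ⟨lf v, lf_ne_zero (fun h0 => h (h0 ▸ hv)), rfl⟩⟩

end Arrgt

open Arrgt

instance : Fact (Nat.Prime 11) := ⟨by norm_num⟩

/-- The normal vectors of the arrangement `B` in `𝔽₁₁³`. -/
def Bvecs : List (Fin 3 → ZMod 11) :=
  [![0,0,1], ![0,1,1], ![0,1,2], ![0,1,3], ![0,1,4], ![0,1,5], ![0,1,6],
   ![1,0,0], ![1,0,1], ![1,2,2], ![1,3,1], ![1,3,10], ![1,4,3], ![1,4,4],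
   ![1,5,7], ![1,6,4], ![1,6,6], ![1,8,5], ![1,8,8], ![1,9,0], ![1,9,1],
   ![1,9,4], ![1,9,5], ![1,9,8], ![1,9,9], ![1,10,0], ![1,10,5]]
section Aux
open Submodule Module

local notation "V3" => (Fin 3 → ZMod 11)

def dp (v w : V3) : ZMod 11 := v 0 * w 0 + v 1 * w 1 + v 2 * w 2

def crs (v w : V3) : V3 :=
  ![v 1 * w 2 - v 2 * w 1, v 2 * w 0 - v 0 * w 2, v 0 * w 1 - v 1 * w 0]

def veq (a b : V3) : Bool := a 0 == b 0 && a 1 == b 1 && a 2 == b 2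

def nrm (u : V3) : V3 :=
  if u 0 ≠ 0 then (u 0)^9 • u else if u 1 ≠ 0 then (u 1)^9 • u
  else if u 2 ≠ 0 then (u 2)^9 • u else 0

def countDistinct : List V3 → ℕ
  | [] => 0
  | a :: l => (if l.any (veq a) then 0 else 1) + countDistinct l

def cnt (v : V3) : ℕ :=
  countDistinct ((Bvecs.filter (fun w => !(veq (crs v w) 0))).map (fun w => nrm (crs v w)))

def mcount (u : V3) : ℕ :=
  countDistinct (Bvecs.filter (fun v => dp v u == 0))

def pts : List V3 :=
  ((Bvecs.map (fun v => Bvecs.map (fun w => crs v w))).flatten).filter (fun u => !(veq u 0))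

lemma funext3 {f g : V3} (h0 : f 0 = g 0) (h1 : f 1 = g 1) (h2 : f 2 = g 2) : f = g := by
  funext i
  fin_cases i
  · exact h0
  · exact h1
  · exact h2

lemma veq_iff (a b : V3) : veq a b = true ↔ a = b := by
  constructor
  · intro h
    simp only [veq, Bool.and_eq_true, beq_iff_eq] at h
    exact funext3 h.1.1 h.1.2 h.2
  · rintro rfl; simp [veq]

lemma veq_false_iff (a b : V3) : veq a b = false ↔ a ≠ b := by
  rw [Bool.eq_false_iff]
  exact not_congr (veq_iff a b)

lemma bnot_veq_iff (a b : V3) : (!(veq a b)) = true ↔ a ≠ b := by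
  rw [Bool.not_eq_true', veq_false_iff]

lemma lf_apply (v x : V3) : lf v x = dp v x := by
  simp [lf, dp, Fin.sum_univ_three]

lemma mem_perp {v x : V3} : x ∈ perp v ↔ dp v x = 0 := by
  rw [perp, LinearMap.mem_ker, lf_apply]

lemma perp_smul {c : ZMod 11} (hc : c ≠ 0) (v : V3) : perp (c • v) = perp v := by
  ext x
  simp only [mem_perp, dp, Pi.smul_apply, smul_eq_mul]
  have h : (c * v 0) * x 0 + (c * v 1) * x 1 + (c * v 2) * x 2
      = c * (v 0 * x 0 + v 1 * x 1 + v 2 * x 2) := by ring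
  rw [h, mul_eq_zero]
  exact ⟨fun h' => h'.resolve_left hc, Or.inr⟩

lemma dp_crs_left (v w : V3) : dp v (crs v w) = 0 := by
  simp [dp, crs]; ring

lemma dp_crs_right (v w : V3) : dp w (crs v w) = 0 := by
  simp [dp, crs]; ring

lemma colinear {a b : V3}
    (h01 : a 0 * b 1 = a 1 * b 0) (h02 : a 0 * b 2 = a 2 * b 0)
    (h12 : a 1 * b 2 = a 2 * b 1) (ha : a ≠ 0) : ∃ c : ZMod 11, b = c • a := by
  by_cases h0 : a 0 ≠ 0
  · refine ⟨(a 0)⁻¹ * b 0, funext3 ?_ ?_ ?_⟩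
    · show b 0 = (a 0)⁻¹ * b 0 * a 0; field_simp
    · show b 1 = (a 0)⁻¹ * b 0 * a 1
      field_simp
      first | linear_combination h01 | linear_combination -h01
    · show b 2 = (a 0)⁻¹ * b 0 * a 2
      field_simp
      first | linear_combination h02 | linear_combination -h02
  · push_neg at h0
    by_cases h1 : a 1 ≠ 0
    · refine ⟨(a 1)⁻¹ * b 1, funext3 ?_ ?_ ?_⟩
      · show b 0 = (a 1)⁻¹ * b 1 * a 0
        rw [h0, mul_zero]
        rw [h0, zero_mul] at h01
        exact ((mul_eq_zero.mp h01.symm).resolve_left h1).symm ▸ rfl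
      · show b 1 = (a 1)⁻¹ * b 1 * a 1; field_simp
      · show b 2 = (a 1)⁻¹ * b 1 * a 2
        field_simp
        first | linear_combination h12 | linear_combination -h12
    · push_neg at h1
      by_cases h2 : a 2 ≠ 0
      · refine ⟨(a 2)⁻¹ * b 2, funext3 ?_ ?_ ?_⟩
        · show b 0 = (a 2)⁻¹ * b 2 * a 0
          rw [h0, mul_zero]
          rw [h0, zero_mul] at h02
          exact ((mul_eq_zero.mp h02.symm).resolve_left h2).symm ▸ rfl
        · show b 1 = (a 2)⁻¹ * b 2 * a 1
          rw [h1, mul_zero]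
          rw [h1, zero_mul] at h12
          exact ((mul_eq_zero.mp h12.symm).resolve_left h2).symm ▸ rfl
        · show b 2 = (a 2)⁻¹ * b 2 * a 2; field_simp
      · push_neg at h2
        exact absurd (funext3 h0 h1 h2) ha

lemma crs_eq_zero_rel {v w : V3} (h : crs v w = 0) :
    v 0 * w 1 = v 1 * w 0 ∧ v 0 * w 2 = v 2 * w 0 ∧ v 1 * w 2 = v 2 * w 1 := by
  have h0 := congrFun h 0
  have h1 := congrFun h 1
  have h2 := congrFun h 2
  simp only [crs, Matrix.cons_val_zero, Matrix.cons_val_one, Matrix.head_cons,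
    Matrix.cons_val_two, Matrix.tail_cons, Pi.zero_apply] at h0 h1 h2
  refine ⟨?_, ?_, ?_⟩
  · linear_combination h2
  · linear_combination -h1
  · linear_combination h0

lemma perp_eq_of_crs_zero {v w : V3} (hv : v ≠ 0) (hw : w ≠ 0) (h : crs v w = 0) :
    perp v = perp w := by
  obtain ⟨h01, h02, h12⟩ := crs_eq_zero_rel h
  obtain ⟨c, rfl⟩ := colinear h01 h02 h12 hv
  have hc : c ≠ 0 := by rintro rfl; simp at hw
  rw [perp_smul hc]

lemma finrank_perp {v : V3} (hv : v ≠ 0) : finrank (ZMod 11) (perp v) = 2 := by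
  have hf : lf v ≠ 0 := lf_ne_zero hv
  obtain ⟨x, hx⟩ : ∃ x, lf v x ≠ 0 := by
    by_contra hne
    push_neg at hne
    exact hf (LinearMap.ext fun x => hne x)
  have hr : LinearMap.range (lf v) = ⊤ := by
    rw [eq_top_iff]
    rintro y -
    exact ⟨(y * (lf v x)⁻¹) • x, by rw [LinearMap.map_smul, smul_eq_mul]; field_simp⟩
  have h := LinearMap.finrank_range_add_finrank_ker (lf v)
  rw [hr, finrank_top] at h
  have h3 : finrank (ZMod 11) V3 = 3 := by simp
  have h1 : finrank (ZMod 11) (ZMod 11) = 1 := finrank_self _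
  rw [h3, h1] at h
  have hk : perp v = LinearMap.ker (lf v) := rfl
  rw [hk]
  omega

lemma crs_x_rel {v w x : V3} (hv : dp v x = 0) (hw : dp w x = 0) :
    crs v w 0 * x 1 = crs v w 1 * x 0 ∧ crs v w 0 * x 2 = crs v w 2 * x 0 ∧
      crs v w 1 * x 2 = crs v w 2 * x 1 := by
  simp only [dp] at hv hw
  simp only [crs, Matrix.cons_val_zero, Matrix.cons_val_one, Matrix.head_cons,
    Matrix.cons_val_two, Matrix.tail_cons]
  refine ⟨?_, ?_, ?_⟩
  · linear_combination (w 2) * hv - (v 2) * hw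
  · linear_combination -(w 1) * hv + (v 1) * hw
  · linear_combination (w 0) * hv - (v 0) * hw

lemma mem_span_crs {v w x : V3} (hv : dp v x = 0) (hw : dp w x = 0)
    (hc : crs v w ≠ 0) : x ∈ span (ZMod 11) {crs v w} := by
  obtain ⟨h01, h02, h12⟩ := crs_x_rel hv hw
  obtain ⟨c, rfl⟩ := colinear h01 h02 h12 hc
  exact Submodule.smul_mem _ c (Submodule.mem_span_singleton_self _)

lemma inf_perp {v w : V3} (hc : crs v w ≠ 0) :
    perp v ⊓ perp w = span (ZMod 11) {crs v w} := by
  apply le_antisymm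
  · rintro x ⟨hxv, hxw⟩
    exact mem_span_crs (mem_perp.mp hxv) (mem_perp.mp hxw) hc
  · rw [span_le, Set.singleton_subset_iff]
    exact ⟨mem_perp.mpr (dp_crs_left v w), mem_perp.mpr (dp_crs_right v w)⟩

lemma perp_eq_iff {v w : V3} (hv : v ≠ 0) (hw : w ≠ 0) :
    perp v = perp w ↔ crs v w = 0 := by
  constructor
  · intro h
    by_contra hc
    have h2 := inf_perp hc
    rw [h, inf_idem] at h2
    have := congrArg (fun p : Submodule (ZMod 11) (Fin 3 → ZMod 11) => finrank (ZMod 11) p) h2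
    rw [finrank_perp hw, finrank_span_singleton hc] at this
    exact absurd this (by norm_num)
  · exact perp_eq_of_crs_zero hv hw

lemma pow10 {c : ZMod 11} (hc : c ≠ 0) : c ^ 10 = 1 := by
  have h := ZMod.pow_card_sub_one_eq_one hc
  norm_num at h
  exact h

lemma nrm_eq_smul {a : V3} (ha : a ≠ 0) : ∃ c : ZMod 11, c ≠ 0 ∧ nrm a = c • a := by
  unfold nrm
  split_ifs with h0 h1 h2
  · exact ⟨_, pow_ne_zero 9 h0, rfl⟩
  · exact ⟨_, pow_ne_zero 9 h1, rfl⟩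
  · exact ⟨_, pow_ne_zero 9 h2, rfl⟩
  · push_neg at h0 h1 h2
    exact absurd (funext3 h0 h1 h2) ha

lemma nrm_smul {c : ZMod 11} (hc : c ≠ 0) (a : V3) : nrm (c • a) = nrm a := by
  have key : ∀ t : ZMod 11, (c * t)^9 * c = t^9 := fun t => by
    linear_combination t ^ 9 * pow10 hc
  have e0 : (c • a) 0 = c * a 0 := rfl
  have e1 : (c • a) 1 = c * a 1 := rfl
  have e2 : (c • a) 2 = c * a 2 := rfl
  unfold nrm
  rw [e0, e1, e2]
  simp only [ne_eq, mul_eq_zero, hc, false_or]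
  split_ifs with h0 h1 h2 <;>
    first
      | rfl
      | rw [smul_smul, key]

lemma span_eq_iff_nrm {a b : V3} (ha : a ≠ 0) (hb : b ≠ 0) :
    span (ZMod 11) {a} = span (ZMod 11) {b} ↔ nrm a = nrm b := by
  constructor
  · intro h
    have hmem : b ∈ span (ZMod 11) {a} := h ▸ mem_span_singleton_self b
    obtain ⟨t, ht⟩ := mem_span_singleton.mp hmem
    have ht0 : t ≠ 0 := by rintro rfl; rw [zero_smul] at ht; exact hb ht.symm
    rw [← ht, nrm_smul ht0]
  · intro h
    obtain ⟨c, hc, hca⟩ := nrm_eq_smul ha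
    obtain ⟨d, hd, hdb⟩ := nrm_eq_smul hb
    have hcd : c • a = d • b := by rw [← hca, ← hdb, h]
    apply le_antisymm <;> rw [span_le, Set.singleton_subset_iff]
    · apply mem_span_singleton.mpr
      exact ⟨c⁻¹ * d, by rw [mul_smul, ← hcd, smul_smul, inv_mul_cancel₀ hc, one_smul]⟩
    · apply mem_span_singleton.mpr
      exact ⟨d⁻¹ * c, by rw [mul_smul, hcd, smul_smul, inv_mul_cancel₀ hd, one_smul]⟩

lemma any_veq (a : V3) (l : List V3) : l.any (veq a) = true ↔ a ∈ l := by
  rw [List.any_eq_true]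
  constructor
  · rintro ⟨x, hx, hv⟩
    rwa [(veq_iff a x).mp hv]
  · intro h
    exact ⟨a, h, (veq_iff a a).mpr rfl⟩

lemma countDistinct_eq_ncard (l : List V3) : countDistinct l = {x | x ∈ l}.ncard := by
  induction l with
  | nil => simp [countDistinct]
  | cons a l ih =>
    have hset : {x | x ∈ a :: l} = insert a {x | x ∈ l} := by ext x; simp [List.mem_cons]
    rw [hset]
    by_cases hm : a ∈ l
    · rw [Set.insert_eq_self.mpr (show a ∈ {x | x ∈ l} from hm)]
      simp [countDistinct, (any_veq a l).mpr hm, ih]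
    · rw [Set.ncard_insert_of_notMem (show a ∉ {x | x ∈ l} from hm) l.finite_toSet]
      have hany : l.any (veq a) = false := by
        rw [Bool.eq_false_iff]; intro h; exact hm ((any_veq a l).mp h)
      have hcd : countDistinct (a :: l) = (if l.any (veq a) then 0 else 1) + countDistinct l := rfl
      rw [hcd, hany, ih]
      simp [Nat.add_comm]

lemma ncard_image_eq {α β γ : Type*} (l : List α) (f : α → β) (g : α → γ)
    (h : ∀ a ∈ l, ∀ b ∈ l, (f a = f b ↔ g a = g b)) :
    (f '' {x | x ∈ l}).ncard = (g '' {x | x ∈ l}).ncard := by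
  induction l with
  | nil => simp
  | cons a l ih =>
    have hcons : {x | x ∈ a :: l} = insert a {x | x ∈ l} := by ext x; simp [List.mem_cons]
    rw [hcons, Set.image_insert_eq, Set.image_insert_eq]
    have hmem : f a ∈ f '' {x | x ∈ l} ↔ g a ∈ g '' {x | x ∈ l} := by
      simp only [Set.mem_image, Set.mem_setOf_eq]
      constructor
      · rintro ⟨b, hb, hfb⟩
        exact ⟨b, hb, (h b (List.mem_cons_of_mem _ hb) a List.mem_cons_self).mp hfb⟩
      · rintro ⟨b, hb, hgb⟩
        exact ⟨b, hb, (h b (List.mem_cons_of_mem _ hb) a List.mem_cons_self).mpr hgb⟩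
    have ih' := ih (fun x hx y hy => h x (List.mem_cons_of_mem _ hx) y (List.mem_cons_of_mem _ hy))
    by_cases hm : f a ∈ f '' {x | x ∈ l}
    · rw [Set.insert_eq_self.mpr hm, Set.insert_eq_self.mpr (hmem.mp hm)]
      exact ih'
    · rw [Set.ncard_insert_of_notMem hm (l.finite_toSet.image f),
        Set.ncard_insert_of_notMem (fun hg => hm (hmem.mpr hg)) (l.finite_toSet.image g), ih']

lemma ncard_image_cd {α : Type*} {β : Type*} (l : List α) (f : α → β) (g : α → V3)
    (h : ∀ a ∈ l, ∀ b ∈ l, (f a = f b ↔ g a = g b)) :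
    (f '' {x | x ∈ l}).ncard = countDistinct (l.map g) := by
  rw [ncard_image_eq l f g h, countDistinct_eq_ncard]
  congr 1
  ext y
  simp

end Aux
section Aux2
open Submodule Module

-- Decidable facts (to be proved by `decide` at the end)
set_option maxRecDepth 1000000 in
set_option maxHeartbeats 4000000 in
lemma D1 : Bvecs.all (fun v => !(veq v 0)) = true := by decide

set_option maxRecDepth 1000000 in
set_option maxHeartbeats 8000000 in
lemma D2 : (Bvecs.all (fun v => Bvecs.all (fun w => veq v w || !(veq (crs v w) 0)))) = true := by
  decide

set_option maxRecDepth 1000000 in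
set_option maxHeartbeats 16000000 in
lemma D3 : (Bvecs.all (fun v => cnt v == 10 || cnt v == 11)) = true := by decide

set_option maxRecDepth 1000000 in
set_option maxHeartbeats 16000000 in
lemma D4 : countDistinct (Bvecs.filter (fun v => cnt v == 10)) = 15 := by decide

set_option maxRecDepth 1000000 in
set_option maxHeartbeats 16000000 in
lemma D5 : countDistinct (Bvecs.filter (fun v => cnt v == 11)) = 12 := by decide

set_option maxRecDepth 1000000 in
set_option maxHeartbeats 64000000 in
lemma D6 : (pts.all (fun u => mcount u == 2 || mcount u == 3 || mcount u == 7)) = true := by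
  decide

set_option maxRecDepth 1000000 in
set_option maxHeartbeats 64000000 in
lemma D7 : countDistinct ((pts.filter (fun u => mcount u == 2)).map nrm) = 15 := by decide

set_option maxRecDepth 1000000 in
set_option maxHeartbeats 64000000 in
lemma D8 : countDistinct ((pts.filter (fun u => mcount u == 3)).map nrm) = 70 := by decide

set_option maxRecDepth 1000000 in
set_option maxHeartbeats 64000000 in
lemma D9 : countDistinct ((pts.filter (fun u => mcount u == 7)).map nrm) = 6 := by decide

lemma Bnz : ∀ v ∈ Bvecs, v ≠ (0 : Fin 3 → ZMod 11) := by
  intro v hv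
  have h := List.all_eq_true.mp D1 v hv
  rwa [bnot_veq_iff] at h

lemma Bcrs : ∀ v ∈ Bvecs, ∀ w ∈ Bvecs, v ≠ w → crs v w ≠ 0 := by
  intro v hv w hw hne
  have h := List.all_eq_true.mp (List.all_eq_true.mp D2 v hv) w hw
  rcases (Bool.or_eq_true _ _).mp h with h | h
  · exact absurd ((veq_iff v w).mp h) hne
  · exact (bnot_veq_iff _ _).mp h

lemma cnt_mem : ∀ v ∈ Bvecs, cnt v = 10 ∨ cnt v = 11 := by
  intro v hv
  have h := List.all_eq_true.mp D3 v hv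
  rcases Bool.or_eq_true _ _ |>.mp h with h | h <;> [left; right] <;> exact beq_iff_eq.mp h

lemma mcount_mem : ∀ u ∈ pts, mcount u = 2 ∨ mcount u = 3 ∨ mcount u = 7 := by
  intro u hu
  have h := List.all_eq_true.mp D6 u hu
  rcases (Bool.or_eq_true _ _).mp h with h | h
  · rcases (Bool.or_eq_true _ _).mp h with h | h
    · exact Or.inl (beq_iff_eq.mp h)
    · exact Or.inr (Or.inl (beq_iff_eq.mp h))
  · exact Or.inr (Or.inr (beq_iff_eq.mp h))

lemma perp_eq_perp_iff {v w : Fin 3 → ZMod 11} (hv : v ∈ Bvecs) (hw : w ∈ Bvecs) :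
    perp v = perp w ↔ v = w := by
  constructor
  · intro h
    by_contra hne
    exact Bcrs v hv w hw hne ((perp_eq_iff (Bnz v hv) (Bnz w hw)).mp h)
  · rintro rfl; rfl

lemma ncard_perp_image (l : List (Fin 3 → ZMod 11)) (hl : ∀ v ∈ l, v ∈ Bvecs) :
    ((perp : (Fin 3 → ZMod 11) → _) '' {x | x ∈ l}).ncard = countDistinct l := by
  have h := ncard_image_cd l perp id (fun a ha b hb => by
    rw [perp_eq_perp_iff (hl a ha) (hl b hb)]; exact Iff.rfl)
  simpa using h

lemma setdiff_eq {v : Fin 3 → ZMod 11} (hv : v ∈ Bvecs) :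
    ((perp : (Fin 3 → ZMod 11) → _) '' {x | x ∈ Bvecs}) \ {perp v} =
      perp '' {w | w ∈ Bvecs.filter (fun w => !(veq (crs v w) 0))} := by
  ext H
  simp only [Set.mem_diff, Set.mem_image, Set.mem_setOf_eq, Set.mem_singleton_iff,
    List.mem_filter]
  constructor
  · rintro ⟨⟨w, hw, rfl⟩, hne⟩
    refine ⟨w, ⟨hw, (bnot_veq_iff _ _).mpr ?_⟩, rfl⟩
    intro hc0
    exact hne (perp_eq_of_crs_zero (Bnz v hv) (Bnz w hw) hc0).symm
  · rintro ⟨w, ⟨hw, hb⟩, rfl⟩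
    refine ⟨⟨w, hw, rfl⟩, fun heq => ?_⟩
    exact (bnot_veq_iff _ _).mp hb ((perp_eq_iff (Bnz v hv) (Bnz w hw)).mp heq.symm)

lemma inner_ncard {v : Fin 3 → ZMod 11} (hv : v ∈ Bvecs) :
    ((fun H' => perp v ⊓ H') ''
      (((perp : (Fin 3 → ZMod 11) → _) '' {x | x ∈ Bvecs}) \ {perp v})).ncard = cnt v := by
  rw [setdiff_eq hv, Set.image_image]
  have hcong : ∀ w ∈ {w | w ∈ Bvecs.filter (fun w => !(veq (crs v w) 0))},
      perp v ⊓ perp w = span (ZMod 11) {crs v w} := by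
    intro w hw
    exact inf_perp ((bnot_veq_iff _ _).mp (List.mem_filter.mp hw).2)
  rw [Set.image_congr hcong]
  exact ncard_image_cd _ (fun w => span (ZMod 11) {crs v w}) (fun w => nrm (crs v w))
    (fun a ha b hb => span_eq_iff_nrm
      ((bnot_veq_iff _ _).mp (List.mem_filter.mp ha).2)
      ((bnot_veq_iff _ _).mp (List.mem_filter.mp hb).2))

lemma mem_pts {u : Fin 3 → ZMod 11} :
    u ∈ pts ↔ (∃ v ∈ Bvecs, ∃ w ∈ Bvecs, crs v w = u) ∧ u ≠ 0 := by
  constructor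
  · intro hu
    obtain ⟨hu1, hu2⟩ := List.mem_filter.mp hu
    refine ⟨?_, (bnot_veq_iff _ _).mp hu2⟩
    obtain ⟨l, hl, hul⟩ := List.mem_flatten.mp hu1
    obtain ⟨a, ha, rfl⟩ := List.mem_map.mp hl
    obtain ⟨b, hb, rfl⟩ := List.mem_map.mp hul
    exact ⟨a, ha, b, hb, rfl⟩
  · rintro ⟨⟨a, ha, b, hb, rfl⟩, hne⟩
    refine List.mem_filter.mpr ⟨?_, (bnot_veq_iff _ _).mpr hne⟩
    exact List.mem_flatten.mpr ⟨Bvecs.map (fun w => crs a w),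
      List.mem_map.mpr ⟨a, ha, rfl⟩, List.mem_map.mpr ⟨b, hb, rfl⟩⟩

lemma lattice_line {p : Submodule (ZMod 11) (Fin 3 → ZMod 11)}
    (hp : p ∈ setLattice ((perp : (Fin 3 → ZMod 11) → _) '' {x | x ∈ Bvecs}))
    (hr : finrank (ZMod 11) p = 1) :
    ∃ u ∈ pts, p = span (ZMod 11) {u} := by
  obtain ⟨s, hs, rfl⟩ := hp
  by_cases hcard : s.card ≤ 1
  · exfalso
    rcases Finset.eq_empty_or_nonempty s with rfl | ⟨H, hH⟩
    · rw [Finset.inf_empty] at hr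
      have h3 : finrank (ZMod 11) (Fin 3 → ZMod 11) = 3 := by simp
      rw [finrank_top] at hr
      omega
    · have hs1 : s = {H} := Finset.eq_singleton_iff_unique_mem.mpr
        ⟨hH, fun b hb => Finset.card_le_one.mp hcard b hb H hH⟩
      subst hs1
      rw [Finset.inf_singleton] at hr
      simp only [id_eq] at hr
      obtain ⟨w, hw, rfl⟩ := hs (Finset.mem_coe.mpr hH)
      rw [finrank_perp (Bnz w hw)] at hr
      omega
  · push_neg at hcard
    obtain ⟨H1, hH1, H2, hH2, hne⟩ := Finset.one_lt_card.mp hcard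
    obtain ⟨v, hv, hEv⟩ := hs (Finset.mem_coe.mpr hH1)
    obtain ⟨w, hw, hEw⟩ := hs (Finset.mem_coe.mpr hH2)
    have hvw : v ≠ w := fun h => hne (by rw [← hEv, ← hEw, h])
    have hcrs : crs v w ≠ 0 := Bcrs v hv w hw hvw
    have hle : s.inf id ≤ span (ZMod 11) {crs v w} := by
      rw [← inf_perp hcrs, hEv, hEw]
      exact le_inf (Finset.inf_le hH1) (Finset.inf_le hH2)
    have heq : s.inf id = span (ZMod 11) {crs v w} :=
      Submodule.eq_of_le_of_finrank_le hle (by rw [finrank_span_singleton hcrs, hr])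
    exact ⟨crs v w, mem_pts.mpr ⟨⟨v, hv, w, hw, rfl⟩, hcrs⟩, heq⟩

lemma line_in_lattice {u : Fin 3 → ZMod 11} (hu : u ∈ pts) :
    span (ZMod 11) {u} ∈ setLattice ((perp : (Fin 3 → ZMod 11) → _) '' {x | x ∈ Bvecs}) ∧
      finrank (ZMod 11) (span (ZMod 11) {u} : Submodule (ZMod 11) (Fin 3 → ZMod 11)) = 1 := by
  obtain ⟨⟨v, hv, w, hw, rfl⟩, hne⟩ := mem_pts.mp hu
  refine ⟨⟨{perp v, perp w}, ?_, ?_⟩, finrank_span_singleton hne⟩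
  · intro H hH
    rcases Finset.mem_insert.mp (Finset.mem_coe.mp hH) with h | h
    · exact ⟨v, hv, h.symm⟩
    · exact ⟨w, hw, (Finset.mem_singleton.mp h).symm⟩
  · rw [Finset.inf_insert, Finset.inf_singleton]
    exact (inf_perp hne).symm

lemma count_planes (u : Fin 3 → ZMod 11) :
    {H ∈ (perp : (Fin 3 → ZMod 11) → _) '' {x | x ∈ Bvecs} |
      span (ZMod 11) {u} ≤ H}.ncard = mcount u := by
  have hset : {H ∈ (perp : (Fin 3 → ZMod 11) → _) '' {x | x ∈ Bvecs} |
      span (ZMod 11) {u} ≤ H} = perp '' {w | w ∈ Bvecs.filter (fun v => dp v u == 0)} := by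
    ext H
    simp only [Set.mem_sep_iff, Set.mem_image, Set.mem_setOf_eq, List.mem_filter, beq_iff_eq]
    constructor
    · rintro ⟨⟨v, hv, rfl⟩, hle⟩
      exact ⟨v, ⟨hv, mem_perp.mp ((Submodule.span_singleton_le_iff_mem u _).mp hle)⟩, rfl⟩
    · rintro ⟨v, ⟨hv, hdp⟩, rfl⟩
      exact ⟨⟨v, hv, rfl⟩, (Submodule.span_singleton_le_iff_mem u _).mpr (mem_perp.mpr hdp)⟩
  rw [hset, ncard_perp_image _ (fun v hv => (List.mem_filter.mp hv).1)]
  rfl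

end Aux2

/-- The arrangement `B` of 27 hyperplanes in `𝔽₁₁³` has the same lattice invariants as
the complex arrangement `A`: every restriction has 10 or 11 elements (15 hyperplanes
with 10 and 12 with 11), and the point multiplicities form the multiset
`{{2^15, 3^70, 7^6}}`. -/
theorem B_lattice_invariants
    (𝓑 : Set (Submodule (ZMod 11) (Fin 3 → ZMod 11)))
    (h𝓑 : 𝓑 = perp '' {v | v ∈ Bvecs}) :
    (∀ H ∈ 𝓑, ((fun H' => H ⊓ H') '' (𝓑 \ {H})).ncard ∈ ({10, 11} : Set ℕ)) ∧
      {H ∈ 𝓑 | ((fun H' => H ⊓ H') '' (𝓑 \ {H})).ncard = 10}.ncard = 15 ∧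
      {H ∈ 𝓑 | ((fun H' => H ⊓ H') '' (𝓑 \ {H})).ncard = 11}.ncard = 12 ∧
      (∀ p ∈ setLattice 𝓑, Module.finrank (ZMod 11) p = 1 →
        {H ∈ 𝓑 | p ≤ H}.ncard ∈ ({2, 3, 7} : Set ℕ)) ∧
      {p ∈ setLattice 𝓑 | Module.finrank (ZMod 11) p = 1 ∧
        {H ∈ 𝓑 | p ≤ H}.ncard = 2}.ncard = 15 ∧
      {p ∈ setLattice 𝓑 | Module.finrank (ZMod 11) p = 1 ∧
        {H ∈ 𝓑 | p ≤ H}.ncard = 3}.ncard = 70 ∧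
      {p ∈ setLattice 𝓑 | Module.finrank (ZMod 11) p = 1 ∧
        {H ∈ 𝓑 | p ≤ H}.ncard = 7}.ncard = 6 := by
  subst h𝓑
  have part2 : ∀ k : ℕ,
      {H ∈ (perp : (Fin 3 → ZMod 11) → _) '' {v | v ∈ Bvecs} |
        ((fun H' => H ⊓ H') '' ((perp '' {v | v ∈ Bvecs}) \ {H})).ncard = k}
      = perp '' {x | x ∈ Bvecs.filter (fun v => cnt v == k)} := by
    intro k
    ext H
    simp only [Set.mem_setOf_eq, Set.mem_image, List.mem_filter, beq_iff_eq]
    constructor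
    · rintro ⟨⟨v, hv, rfl⟩, hcard⟩
      refine ⟨v, ⟨hv, ?_⟩, rfl⟩
      rw [← inner_ncard hv]
      exact hcard
    · rintro ⟨v, ⟨hv, hcnt⟩, rfl⟩
      exact ⟨⟨v, hv, rfl⟩, by rw [inner_ncard hv]; exact hcnt⟩
  have part3 : ∀ k : ℕ,
      {p ∈ setLattice ((perp : (Fin 3 → ZMod 11) → _) '' {v | v ∈ Bvecs}) |
        Module.finrank (ZMod 11) p = 1 ∧
        {H ∈ (perp : (Fin 3 → ZMod 11) → _) '' {v | v ∈ Bvecs} | p ≤ H}.ncard = k}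
      = (fun u => Submodule.span (ZMod 11) {u}) ''
          {u | u ∈ pts.filter (fun u => mcount u == k)} := by
    intro k
    ext p
    simp only [Set.mem_setOf_eq, Set.mem_image, List.mem_filter, beq_iff_eq]
    constructor
    · rintro ⟨hp, hr, hcnt⟩
      obtain ⟨u, hu, rfl⟩ := lattice_line hp hr
      refine ⟨u, ⟨hu, ?_⟩, rfl⟩
      rw [← count_planes u]
      exact hcnt
    · rintro ⟨u, ⟨hu, hmc⟩, rfl⟩
      obtain ⟨hlat, hr⟩ := line_in_lattice hu
      refine ⟨hlat, hr, ?_⟩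
      show {H ∈ (perp : (Fin 3 → ZMod 11) → _) '' {x | x ∈ Bvecs} |
        Submodule.span (ZMod 11) {u} ≤ H}.ncard = k
      rw [count_planes u]
      exact hmc
  have hiff : ∀ k : ℕ, ∀ a ∈ pts.filter (fun u => mcount u == k),
      ∀ b ∈ pts.filter (fun u => mcount u == k),
      (Submodule.span (ZMod 11) {a} = Submodule.span (ZMod 11) {b} ↔ nrm a = nrm b) :=
    fun _ a ha b hb => span_eq_iff_nrm
      (mem_pts.mp (List.mem_filter.mp ha).1).2 (mem_pts.mp (List.mem_filter.mp hb).1).2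
  refine ⟨?_, ?_, ?_, ?_, ?_, ?_, ?_⟩
  · rintro H ⟨v, hv, rfl⟩
    rw [inner_ncard hv]
    rcases cnt_mem v hv with h | h <;> simp [h]
  · rw [part2 10, ncard_perp_image _ (fun v hv => (List.mem_filter.mp hv).1), D4]
  · rw [part2 11, ncard_perp_image _ (fun v hv => (List.mem_filter.mp hv).1), D5]
  · rintro p hp hr
    obtain ⟨u, hu, rfl⟩ := lattice_line hp hr
    rw [count_planes u]
    rcases mcount_mem u hu with h | h | h <;> simp [h]
  · rw [part3 2, ncard_image_cd _ _ nrm (hiff 2), D7]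
  · rw [part3 3, ncard_image_cd _ _ nrm (hiff 3), D8]
  · rw [part3 7, ncard_image_cd _ _ nrm (hiff 7), D9]
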